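/- Let S : [0,1] → ℝ be continuous, R(x) = ∫₀ˣ S(y) dy, let D : [0,1] → ℝ be continuous and strictly positive, let Φ : ℝ → ℝ be of class C³, and set u(x) = ∫ₓ¹ R(y)/D(y) dy (so u'(x) = −R(x)/D(x)). Then for every x ∈ [0,1]: R(x) ∫₀ˣ Φ''(u(y)) S(y) dy = R(x)² Φ''(u(x)) + R(x) ∫₀ˣ Φ'''(u(y)) (R(y)²/D(y)) dy. -/
import Mathlib


open MeasureTheory Set

/-- Integration-by-parts identity: with `u(x) = ∫ₓ¹ R(y)/D(y) dy`,
`R(x) ∫₀ˣ Φ''(u) S dy = R(x)² Φ''(u(x)) + R(x) ∫₀ˣ Φ'''(u) (R²/D) dy`. -/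
theorem stmt_7
    (S : ℝ → ℝ) (hS : ContinuousOn S (Icc 0 1))
    (R : ℝ → ℝ) (hR : ∀ x, R x = ∫ y in (0:ℝ)..x, S y)
    (D : ℝ → ℝ) (hDc : ContinuousOn D (Icc 0 1))
    (hDpos : ∀ x ∈ Icc (0:ℝ) 1, 0 < D x)
    (Φ : ℝ → ℝ) (hΦ : ContDiff ℝ 3 Φ)
    (u : ℝ → ℝ) (hu : ∀ x, u x = ∫ y in x..(1:ℝ), R y / D y) :
    ∀ x ∈ Icc (0:ℝ) 1,
      R x * ∫ y in (0:ℝ)..x, iteratedDeriv 2 Φ (u y) * S y =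
        R x ^ 2 * iteratedDeriv 2 Φ (u x) +
          R x * ∫ y in (0:ℝ)..x, iteratedDeriv 3 Φ (u y) * (R y ^ 2 / D y) := by
  intro x hx
  obtain ⟨hx0, hx1⟩ := hx
  have hIcc : uIcc (0:ℝ) 1 = Icc 0 1 := uIcc_of_le (by norm_num)
  have hΦ23 := contDiff_nat_iff_iteratedDeriv.1 hΦ
  have hΦ2c : Continuous (iteratedDeriv 2 Φ) := hΦ23.1 2 (by norm_num)
  have hΦ3c : Continuous (iteratedDeriv 3 Φ) := hΦ23.1 3 (by norm_num)
  have hΦ2d : Differentiable ℝ (iteratedDeriv 2 Φ) := hΦ23.2 2 (by norm_num)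
  have hΦ2deriv : ∀ z : ℝ, HasDerivAt (iteratedDeriv 2 Φ) (iteratedDeriv 3 Φ z) z := by
    intro z
    have h := (hΦ2d z).hasDerivAt
    have : iteratedDeriv 3 Φ z = deriv (iteratedDeriv 2 Φ) z := by
      conv_lhs => rw [iteratedDeriv_succ]
    rwa [this]
  -- R as a function
  have hReq : R = fun t => ∫ y in (0:ℝ)..t, S y := funext hR
  have hSint : IntegrableOn S (Icc 0 1) := (hS.integrableOn_compact isCompact_Icc)
  have hRc : ContinuousOn R (Icc 0 1) := by
    rw [hReq, ← hIcc]
    exact intervalIntegral.continuousOn_primitive_interval (by rwa [hIcc])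
  -- derivative of R at interior points
  have hRderiv : ∀ y ∈ Ioo (0:ℝ) 1, HasDerivAt R (S y) y := by
    intro y hy
    have hmem : Icc (0:ℝ) 1 ∈ nhds y := Icc_mem_nhds hy.1 hy.2
    have hSc : ContinuousAt S y := (hS y ⟨hy.1.le, hy.2.le⟩).continuousAt hmem
    have hint : IntervalIntegrable S volume 0 y :=
      (hS.mono (Icc_subset_Icc le_rfl hy.2.le)).intervalIntegrable_of_Icc hy.1.le
    rw [hReq]
    exact (intervalIntegral.integral_hasStrictDerivAt_right hint
      ⟨Icc 0 1, hmem, hSint.aestronglyMeasurable⟩ hSc).hasDerivAt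
  -- g = R/D
  set g : ℝ → ℝ := fun y => R y / D y with hg
  have hgc : ContinuousOn g (Icc 0 1) := hRc.div hDc (fun y hy => (hDpos y hy).ne')
  have hgint : IntegrableOn g (Icc 0 1) := hgc.integrableOn_compact isCompact_Icc
  have hueq : u = fun t => ∫ y in t..(1:ℝ), g y := funext hu
  have huc : ContinuousOn u (Icc 0 1) := by
    rw [hueq, ← hIcc]
    exact intervalIntegral.continuousOn_primitive_interval_left (by rwa [hIcc])
  have huderiv : ∀ y ∈ Ioo (0:ℝ) 1, HasDerivAt u (-(g y)) y := by
    intro y hy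
    have hmem : Icc (0:ℝ) 1 ∈ nhds y := Icc_mem_nhds hy.1 hy.2
    have hgcy : ContinuousAt g y := (hgc y ⟨hy.1.le, hy.2.le⟩).continuousAt hmem
    have hint : IntervalIntegrable g volume y 1 :=
      (hgc.mono (Icc_subset_Icc hy.1.le le_rfl)).intervalIntegrable_of_Icc hy.2.le
    rw [hueq]
    exact (intervalIntegral.integral_hasStrictDerivAt_left hint
      ⟨Icc 0 1, hmem, hgint.aestronglyMeasurable⟩ hgcy).hasDerivAt
  -- F = Φ''(u) * R
  set F : ℝ → ℝ := fun y => iteratedDeriv 2 Φ (u y) * R y with hF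
  have hFc : ContinuousOn F (Icc 0 1) := (hΦ2c.comp_continuousOn huc).mul hRc
  set A : ℝ → ℝ := fun y => iteratedDeriv 2 Φ (u y) * S y with hA
  set B : ℝ → ℝ := fun y => iteratedDeriv 3 Φ (u y) * (R y ^ 2 / D y) with hB
  have hAc : ContinuousOn A (Icc 0 1) := (hΦ2c.comp_continuousOn huc).mul hS
  have hBc : ContinuousOn B (Icc 0 1) :=
    (hΦ3c.comp_continuousOn huc).mul
      (((hRc.pow 2)).div hDc (fun y hy => (hDpos y hy).ne'))
  have hAint : IntervalIntegrable A volume 0 x :=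
    (hAc.mono (Icc_subset_Icc le_rfl hx1)).intervalIntegrable_of_Icc hx0
  have hBint : IntervalIntegrable B volume 0 x :=
    (hBc.mono (Icc_subset_Icc le_rfl hx1)).intervalIntegrable_of_Icc hx0
  have hFderiv : ∀ y ∈ Ioo (0:ℝ) x, HasDerivWithinAt F (A y - B y) (Ioi y) y := by
    intro y hy
    have hy' : y ∈ Ioo (0:ℝ) 1 := ⟨hy.1, lt_of_lt_of_le hy.2 hx1⟩
    have hΦu : HasDerivAt (fun t => iteratedDeriv 2 Φ (u t))
        (iteratedDeriv 3 Φ (u y) * -(g y)) y :=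
      (hΦ2deriv (u y)).comp y (huderiv y hy')
    have hprod := hΦu.mul (hRderiv y hy')
    have : A y - B y = iteratedDeriv 3 Φ (u y) * -(g y) * R y
        + iteratedDeriv 2 Φ (u y) * S y := by
      simp only [hA, hB, hg]
      ring
    rw [this]
    exact hprod.hasDerivWithinAt
  have hkey : ∫ y in (0:ℝ)..x, (A y - B y) = F x - F 0 :=
    intervalIntegral.integral_eq_sub_of_hasDeriv_right_of_le hx0
      (hFc.mono (Icc_subset_Icc le_rfl hx1)) hFderiv (hAint.sub hBint)
  rw [intervalIntegral.integral_sub hAint hBint] at hkey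
  have hR0 : R 0 = 0 := by rw [hR 0, intervalIntegral.integral_same]
  have hF0 : F 0 = 0 := by simp [hF, hR0]
  have hFx : F x = iteratedDeriv 2 Φ (u x) * R x := rfl
  rw [hF0, hFx, sub_zero] at hkey
  linear_combination (R x) * hkey
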